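/- Let {L_t}_{t≥0} be a family of functions in L²(ℝ^d) whose closure is compact in L². Then for every δ > 0 there exists A > 0 such that for all t_0 ≥ 0 and l_0 > 0: if ∫_{|x| ≤ l_0} |L_{t_0}(x)|² dx ≥ δ, then ∫_{|x| ≥ A·l_0} |L_{t_0}(x)|² dx ≤ δ. -/

import Mathlib

open MeasureTheory Filter
open scoped ENNReal

variable {α : Type*} [MeasurableSpace α] {μ : Measure α}

theorem my_sq_integrable (f : Lp ℂ 2 μ) : Integrable (fun x => ‖f x‖ ^ 2) μ := by
  have h := (Lp.memLp f).integrable_norm_rpow two_ne_zero ENNReal.ofNat_ne_top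
  have h2 : ((2 : ℝ≥0∞)).toReal = (2 : ℝ) := by simp
  rw [h2] at h
  convert h using 2 with x
  rw [show (2:ℝ) = ((2:ℕ):ℝ) by norm_num, Real.rpow_natCast]

theorem my_norm_sq (f : Lp ℂ 2 μ) : ∫ x, ‖f x‖ ^ 2 ∂μ = ‖f‖ ^ 2 := by
  rw [@norm_sq_eq_re_inner ℂ, L2.inner_def]
  rw [← integral_re (L2.integrable_inner f f)]
  congr 1
  ext x
  rw [inner_self_eq_norm_sq]

theorem my_compare (f g : Lp ℂ 2 μ) (s : Set α) :
    ∫ x in s, ‖f x‖ ^ 2 ∂μ ≤ 2 * ∫ x in s, ‖g x‖ ^ 2 ∂μ + 2 * ‖f - g‖ ^ 2 := by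
  have hfg : Integrable (fun x => ‖(f - g : Lp ℂ 2 μ) x‖ ^ 2) μ := my_sq_integrable _
  have hg : Integrable (fun x => ‖g x‖ ^ 2) μ := my_sq_integrable g
  have hf : Integrable (fun x => ‖f x‖ ^ 2) μ := my_sq_integrable f
  have step1 : ∫ x in s, ‖f x‖ ^ 2 ∂μ ≤
      ∫ x in s, (2 * ‖g x‖ ^ 2 + 2 * ‖(f - g : Lp ℂ 2 μ) x‖ ^ 2) ∂μ := by
    refine integral_mono_ae hf.integrableOn (((hg.const_mul 2).add (hfg.const_mul 2)).integrableOn) ?_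
    filter_upwards [ae_restrict_of_ae (Lp.coeFn_sub f g)] with x hx
    rw [hx]
    have h1 : ‖f x‖ ≤ ‖g x‖ + ‖f x - g x‖ := by
      calc ‖f x‖ = ‖g x + (f x - g x)‖ := by ring_nf
      _ ≤ ‖g x‖ + ‖f x - g x‖ := norm_add_le _ _
    simp only [Pi.sub_apply]
    nlinarith [sq_nonneg (‖g x‖ - ‖f x - g x‖), norm_nonneg (f x), norm_nonneg (g x),
      norm_nonneg (f x - g x)]
  have step2 : ∫ x in s, (2 * ‖g x‖ ^ 2 + 2 * ‖(f - g : Lp ℂ 2 μ) x‖ ^ 2) ∂μ =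
      2 * ∫ x in s, ‖g x‖ ^ 2 ∂μ + 2 * ∫ x in s, ‖(f - g : Lp ℂ 2 μ) x‖ ^ 2 ∂μ := by
    rw [integral_add (hg.const_mul 2).integrableOn (hfg.const_mul 2).integrableOn,
      integral_const_mul, integral_const_mul]
  have step3 : ∫ x in s, ‖(f - g : Lp ℂ 2 μ) x‖ ^ 2 ∂μ ≤ ‖f - g‖ ^ 2 := by
    rw [← my_norm_sq (f - g)]
    exact setIntegral_le_integral hfg (Filter.Eventually.of_forall fun x => by positivity)
  linarith

theorem my_unif (K : Set (Lp ℂ 2 μ)) (hK : IsCompact K) (s : ℕ → Set α)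
    (hs : ∀ f : Lp ℂ 2 μ, Tendsto (fun n => ∫ x in s n, ‖f x‖ ^ 2 ∂μ) atTop (nhds 0))
    {η : ℝ} (hη : 0 < η) : ∃ N : ℕ, ∀ f ∈ K, ∫ x in s N, ‖f x‖ ^ 2 ∂μ ≤ η := by
  have hε : (0:ℝ) < Real.sqrt (η / 4) := Real.sqrt_pos.mpr (by linarith)
  obtain ⟨t, htf, htsub⟩ := Metric.totallyBounded_iff.mp hK.totallyBounded _ hε
  have hchoice : ∀ g : Lp ℂ 2 μ, ∃ N : ℕ, ∀ n ≥ N, ∫ x in s n, ‖g x‖ ^ 2 ∂μ ≤ η / 4 := by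
    intro g
    have := (hs g).eventually (eventually_le_nhds (show (0:ℝ) < η / 4 by linarith))
    exact eventually_atTop.mp this
  choose Ng hNg using hchoice
  refine ⟨htf.toFinset.sup Ng, fun f hf => ?_⟩
  obtain ⟨g, hgt, hfg⟩ := Set.mem_iUnion₂.mp (htsub hf)
  have hdist : ‖f - g‖ < Real.sqrt (η / 4) := by
    rw [← dist_eq_norm]; exact Metric.mem_ball.mp hfg
  have h1 : ∫ x in s (htf.toFinset.sup Ng), ‖g x‖ ^ 2 ∂μ ≤ η / 4 :=
    hNg g _ (Finset.le_sup (htf.mem_toFinset.mpr hgt))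
  have h2 : ‖f - g‖ ^ 2 ≤ η / 4 := by
    nlinarith [norm_nonneg (f - g), Real.sq_sqrt (show (0:ℝ) ≤ η/4 by linarith)]
  calc ∫ x in s (htf.toFinset.sup Ng), ‖f x‖ ^ 2 ∂μ
      ≤ 2 * ∫ x in s (htf.toFinset.sup Ng), ‖g x‖ ^ 2 ∂μ + 2 * ‖f - g‖ ^ 2 := my_compare f g _
    _ ≤ η := by linarith

variable {E : Type*} [NormedAddCommGroup E] [MeasurableSpace E] [OpensMeasurableSpace E]

theorem my_tail (μ : Measure E) (f : Lp ℂ 2 μ) :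
    Tendsto (fun n : ℕ => ∫ x in {x : E | (n:ℝ) ≤ ‖x‖}, ‖f x‖ ^ 2 ∂μ) atTop (nhds 0) := by
  have hsm : ∀ n : ℕ, MeasurableSet {x : E | (n:ℝ) ≤ ‖x‖} := fun n =>
    (isClosed_le continuous_const continuous_norm).measurableSet
  have hanti : Antitone fun n : ℕ => {x : E | (n:ℝ) ≤ ‖x‖} := by
    intro m n hmn x hx
    have hc : (m:ℝ) ≤ (n:ℝ) := Nat.cast_le.mpr hmn
    exact le_trans hc hx
  have h := tendsto_setIntegral_of_antitone hsm hanti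
    ⟨0, (my_sq_integrable f).integrableOn⟩
  have hempty : ⋂ n : ℕ, {x : E | (n:ℝ) ≤ ‖x‖} = ∅ := by
    ext x
    simp only [Set.mem_iInter, Set.mem_setOf_eq, Set.mem_empty_iff_false, iff_false, not_forall,
      not_le]
    obtain ⟨n, hn⟩ := exists_nat_gt ‖x‖
    exact ⟨n, hn⟩
  rwa [hempty, Measure.restrict_empty, integral_zero_measure] at h

theorem my_ball (μ : Measure E) [NullSingletonClass μ] (f : Lp ℂ 2 μ) :
    Tendsto (fun n : ℕ => ∫ x in {x : E | ‖x‖ ≤ 1 / ((n:ℝ) + 1)}, ‖f x‖ ^ 2 ∂μ) atTop (nhds 0) := by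
  have hsm : ∀ n : ℕ, MeasurableSet {x : E | ‖x‖ ≤ 1 / ((n:ℝ) + 1)} := fun n =>
    (isClosed_le continuous_norm continuous_const).measurableSet
  have hanti : Antitone fun n : ℕ => {x : E | ‖x‖ ≤ 1 / ((n:ℝ) + 1)} := by
    intro m n hmn x hx
    simp only [Set.mem_setOf_eq] at hx ⊢
    refine le_trans hx ?_
    have hc : (m:ℝ) ≤ (n:ℝ) := Nat.cast_le.mpr hmn
    apply one_div_le_one_div_of_le (by positivity)
    linarith
  have h := tendsto_setIntegral_of_antitone hsm hanti
    ⟨0, (my_sq_integrable f).integrableOn⟩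
  have hzero : ⋂ n : ℕ, {x : E | ‖x‖ ≤ 1 / ((n:ℝ) + 1)} = {(0:E)} := by
    ext x
    simp only [Set.mem_iInter, Set.mem_setOf_eq, Set.mem_singleton_iff]
    constructor
    · intro hx
      rw [← norm_le_zero_iff]
      by_contra hpos
      push_neg at hpos
      obtain ⟨n, hn⟩ := exists_nat_one_div_lt hpos
      exact absurd (hx n) (not_le.mpr hn)
    · rintro rfl n; simp; positivity
  rw [hzero] at h
  have : μ.restrict {(0:E)} = 0 := Measure.restrict_eq_zero.mpr (measure_singleton 0)
  rwa [this, integral_zero_measure] at h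

/-- For a family `{L_t}_{t ≥ 0}` of `L²(ℝᵈ)` functions which is precompact in `L²`:
for every `δ > 0` there is `A > 0` such that for all `t₀ ≥ 0` and `l₀ > 0`, if the mass
of `L_{t₀}` inside the ball of radius `l₀` is at least `δ`, then the mass outside the
ball of radius `A · l₀` is at most `δ`. -/
theorem stmt_1 (d : ℕ)
    (L : ℝ → Lp ℂ 2 (volume : Measure (EuclideanSpace ℝ (Fin d))))
    (hcompact : IsCompact (closure (L '' Set.Ici 0)))
    (δ : ℝ) (hδ : 0 < δ) :
    ∃ A > 0, ∀ t₀ : ℝ, 0 ≤ t₀ → ∀ l₀ : ℝ, 0 < l₀ →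
      (δ ≤ ∫ x in {x : EuclideanSpace ℝ (Fin d) | ‖x‖ ≤ l₀}, ‖(L t₀ : EuclideanSpace ℝ (Fin d) → ℂ) x‖ ^ 2) →
      (∫ x in {x : EuclideanSpace ℝ (Fin d) | A * l₀ ≤ ‖x‖}, ‖(L t₀ : EuclideanSpace ℝ (Fin d) → ℂ) x‖ ^ 2) ≤ δ := by
  rcases Nat.eq_zero_or_pos d with hd | hd
  · subst hd
    refine ⟨1, one_pos, fun t₀ _ l₀ hl₀ _ => ?_⟩
    have hempty : {x : EuclideanSpace ℝ (Fin 0) | 1 * l₀ ≤ ‖x‖} = ∅ := by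
      ext x
      have hx : x = 0 := Subsingleton.elim _ _
      simp only [Set.mem_setOf_eq, hx, norm_zero, Set.mem_empty_iff_false, iff_false, not_le,
        one_mul]
      exact hl₀
    rw [hempty, Measure.restrict_empty, integral_zero_measure]
    linarith
  · haveI : Nontrivial (EuclideanSpace ℝ (Fin d)) := by
      refine ⟨0, EuclideanSpace.single ⟨0, hd⟩ 1, fun h => ?_⟩
      have h0 := congrArg (fun v => v ⟨0, hd⟩) h
      simp [EuclideanSpace.single_apply] at h0
    set K := closure (L '' Set.Ici 0) with hK
    obtain ⟨M, hM⟩ := my_unif K hcompact _ (fun f => my_ball volume f)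
      (show 0 < δ / 2 by linarith)
    obtain ⟨R, hR⟩ := my_unif K hcompact _ (fun f => my_tail volume f) hδ
    set r : ℝ := 1 / ((M : ℝ) + 1) with hr
    have hrpos : 0 < r := by positivity
    refine ⟨((R : ℝ) + 1) / r, by positivity, fun t₀ ht₀ l₀ hl₀ hmass => ?_⟩
    have hfK : L t₀ ∈ K := subset_closure ⟨t₀, ht₀, rfl⟩
    have hint := my_sq_integrable (L t₀)
    have hrl : r < l₀ := by
      by_contra h
      push_neg at h
      have hsub : {x : EuclideanSpace ℝ (Fin d) | ‖x‖ ≤ l₀} ⊆ {x | ‖x‖ ≤ r} := fun x hx =>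
        le_trans hx h
      have hmono : (∫ x in {x : EuclideanSpace ℝ (Fin d) | ‖x‖ ≤ l₀}, ‖(L t₀) x‖ ^ 2) ≤
          ∫ x in {x : EuclideanSpace ℝ (Fin d) | ‖x‖ ≤ r}, ‖(L t₀) x‖ ^ 2 :=
        setIntegral_mono_set hint.integrableOn
          (Filter.Eventually.of_forall fun x => by positivity) hsub.eventuallyLE
      have hball := hM (L t₀) hfK
      linarith
    have hsub2 : {x : EuclideanSpace ℝ (Fin d) | ((R : ℝ) + 1) / r * l₀ ≤ ‖x‖} ⊆
        {x | (R : ℝ) ≤ ‖x‖} := by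
      intro x hx
      simp only [Set.mem_setOf_eq] at hx ⊢
      have h1 : ((R : ℝ) + 1) / r * r ≤ ((R : ℝ) + 1) / r * l₀ :=
        mul_le_mul_of_nonneg_left hrl.le (by positivity)
      have h2 : ((R : ℝ) + 1) / r * r = (R : ℝ) + 1 := div_mul_cancel₀ _ (ne_of_gt hrpos)
      linarith
    calc (∫ x in {x : EuclideanSpace ℝ (Fin d) | ((R : ℝ) + 1) / r * l₀ ≤ ‖x‖},
            ‖(L t₀) x‖ ^ 2)
        ≤ ∫ x in {x : EuclideanSpace ℝ (Fin d) | (R : ℝ) ≤ ‖x‖}, ‖(L t₀) x‖ ^ 2 :=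
          setIntegral_mono_set hint.integrableOn
            (Filter.Eventually.of_forall fun x => by positivity) hsub2.eventuallyLE
      _ ≤ δ := hR (L t₀) hfK
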